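/- arXiv:2209.05102 — 4 statements merged into one kernel-verified Lean document; each statement's English description precedes it below -/
import Mathlib

section
/- For every vertex cover C of the infinite octagonal grid T₈ and all integers m, n ≥ 1, the set C ∩ ({0,…,2m−1} × {0,…,2n−1}) has at least 3·m·n elements. -/
/-- A vertex cover of a simple graph: every edge has at least one endpoint in `C`. -/
def IsVertexCover {V : Type*} (G : SimpleGraph V) (C : Set V) : Prop :=
  ∀ ⦃u v : V⦄, G.Adj u v → u ∈ C ∨ v ∈ C

/-- The box `{0,…,w−1} × {0,…,h−1}` (w columns, h rows). -/
def box (w h : ℕ) : Set (ℤ × ℤ) :=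
  Set.Ico (0 : ℤ) (w : ℤ) ×ˢ Set.Ico (0 : ℤ) (h : ℤ)

/-- Subgraph of `G` induced on a set `s` of vertices (kept on the same vertex type). -/
def finGrid (G : SimpleGraph (ℤ × ℤ)) (w h : ℕ) : SimpleGraph (ℤ × ℤ) where
  Adj p q := G.Adj p q ∧ p ∈ box w h ∧ q ∈ box w h
  symm := ⟨fun p q hpq => ⟨hpq.1.symm, hpq.2.2, hpq.2.1⟩⟩
  loopless := ⟨fun p hp => G.irrefl hp.1⟩

/-- The infinite octagonal grid (king graph on ℤ²). -/
def T8 : SimpleGraph (ℤ × ℤ) :=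
  SimpleGraph.fromRel (fun p q => |p.1 - q.1| ≤ 1 ∧ |p.2 - q.2| ≤ 1)

open Finset in
noncomputable def blockF (i j : ℕ) : Finset (ℤ × ℤ) :=
  ({((2*(i:ℤ)), (2*(j:ℤ))), (2*(i:ℤ)+1, 2*(j:ℤ)), (2*(i:ℤ), 2*(j:ℤ)+1),
    (2*(i:ℤ)+1, 2*(j:ℤ)+1)} : Finset (ℤ × ℤ))

lemma mem_blockF {i j : ℕ} {p : ℤ × ℤ} :
    p ∈ blockF i j ↔ p = ((2*(i:ℤ)), (2*(j:ℤ))) ∨ p = (2*(i:ℤ)+1, 2*(j:ℤ)) ∨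
      p = (2*(i:ℤ), 2*(j:ℤ)+1) ∨ p = (2*(i:ℤ)+1, 2*(j:ℤ)+1) := by
  simp [blockF]

lemma blockF_adj {i j : ℕ} {p q : ℤ × ℤ} (hp : p ∈ blockF i j) (hq : q ∈ blockF i j)
    (hne : p ≠ q) : T8.Adj p q := by
  refine ⟨hne, Or.inl ⟨?_, ?_⟩⟩ <;>
  · rw [mem_blockF] at hp hq
    rcases hp with rfl | rfl | rfl | rfl <;> rcases hq with rfl | rfl | rfl | rfl <;>
      simp <;> rw [abs_le] <;> constructor <;> omega

lemma blockF_card {i j : ℕ} : (blockF i j).card = 4 := by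
  rw [blockF]
  rw [Finset.card_insert_of_notMem (by simp [Prod.ext_iff]),
    Finset.card_insert_of_notMem (by simp [Prod.ext_iff]),
    Finset.card_insert_of_notMem (by simp [Prod.ext_iff]),
    Finset.card_singleton]

/-- Any vertex cover of the infinite octagonal grid meets `{0,…,2m−1} × {0,…,2n−1}` in at least
`3·m·n` vertices. -/
theorem stmt_5 (C : Set (ℤ × ℤ)) (hcov : IsVertexCover T8 C)
    (m n : ℕ) (hm : 1 ≤ m) (hn : 1 ≤ n) :
    3 * m * n ≤ (C ∩ box (2 * m) (2 * n)).ncard := by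
  classical
  set F : Finset (ℤ × ℤ) :=
    ((Finset.Ico (0:ℤ) (2*m)) ×ˢ (Finset.Ico (0:ℤ) (2*n))).filter (· ∈ C) with hF
  have hset : C ∩ box (2 * m) (2 * n) = ↑F := by
    ext p
    simp only [hF, box, Set.mem_inter_iff, Set.mem_prod, Set.mem_Ico, Finset.coe_filter,
      Finset.mem_product, Finset.mem_Ico, Set.mem_setOf_eq]
    tauto
  rw [hset, Set.ncard_coe_finset]
  -- blocks
  set B : ℕ × ℕ → Finset (ℤ × ℤ) :=
    fun x => (blockF x.1 x.2).filter (· ∈ C) with hB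
  have hcard3 : ∀ x : ℕ × ℕ, 3 ≤ (B x).card := by
    rintro ⟨i, j⟩
    have hle1 : ((blockF i j).filter (· ∉ C)).card ≤ 1 := by
      rw [Finset.card_le_one]
      intro a ha b hb
      simp only [Finset.mem_filter] at ha hb
      by_contra hne
      rcases hcov (blockF_adj ha.1 hb.1 hne) with h | h
      · exact ha.2 h
      · exact hb.2 h
    have := Finset.card_filter_add_card_filter_not (s := blockF i j)
      (p := (· ∈ C))
    rw [blockF_card] at this
    simp only [hB]
    omega
  have hdisj : (↑(Finset.range m ×ˢ Finset.range n : Finset (ℕ × ℕ)) : Set (ℕ × ℕ)).PairwiseDisjoint B := by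
    rintro ⟨i, j⟩ _ ⟨i', j'⟩ _ hne
    simp only [Finset.disjoint_left, hB]
    intro p hp hp'
    simp only [Finset.mem_filter, mem_blockF] at hp hp'
    apply hne
    have h1 := hp.1
    have h2 := hp'.1
    have : i = i' ∧ j = j' := by
      rcases h1 with rfl | rfl | rfl | rfl <;> rcases h2 with h | h | h | h <;>
        simp_all [Prod.ext_iff] <;> omega
    simp [this.1, this.2]
  have hsub : (Finset.range m ×ˢ Finset.range n).biUnion B ⊆ F := by
    intro p hp
    simp only [Finset.mem_biUnion] at hp
    obtain ⟨⟨i, j⟩, hij, hpB⟩ := hp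
    simp only [Finset.mem_product, Finset.mem_range] at hij
    simp only [hB, Finset.mem_filter, mem_blockF] at hpB
    simp only [hF, Finset.mem_filter, Finset.mem_product, Finset.mem_Ico]
    refine ⟨?_, hpB.2⟩
    rcases hpB.1 with rfl | rfl | rfl | rfl <;>
      constructor <;> constructor <;> push_cast <;> omega
  calc 3 * m * n = ∑ _x ∈ Finset.range m ×ˢ Finset.range n, 3 := by
        rw [Finset.sum_const, smul_eq_mul, Finset.card_product, Finset.card_range,
          Finset.card_range]; ring
    _ ≤ ∑ x ∈ Finset.range m ×ˢ Finset.range n, (B x).card :=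
        Finset.sum_le_sum fun x _ => hcard3 x
    _ = ((Finset.range m ×ˢ Finset.range n).biUnion B).card :=
        (Finset.card_biUnion fun x hx y hy hxy => hdisj (by simpa using hx) (by simpa using hy) hxy).symm
    _ ≤ F.card := Finset.card_le_card hsub
end

section
/- Let O₀ = {(x,y) ∈ ℤ × ℤ : y is even} and O₁ = {(x,y) ∈ ℤ × ℤ : y is odd}. Then {O₀, O₁} is a defense-closed family of vertex covers of the infinite hexagonal grid T₃, and for all m, n ≥ 1 each of O₀ and O₁ meets {0,…,m−1} × {0,…,2n−1} in exactly m·n vertices. -/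
/-- The infinite hexagonal grid. -/
def T3 : SimpleGraph (ℤ × ℤ) :=
  SimpleGraph.fromRel (fun p q =>
    q = (p.1, p.2 + 1) ∨
    ((4 : ℤ) ∣ p.2 ∧ q = (p.1 + 1, p.2 + 1)) ∨
    ((4 : ℤ) ∣ (p.2 - 2) ∧ q = (p.1 - 1, p.2 + 1)))

/-- A defense-closed family of vertex covers of `G`: every member is a vertex cover, and for
every member `S` and edge `{u,v}` with `u ∈ S`, `v ∉ S`, some member `S'` is obtained from `S`
by a bijection moving the guard on `u` to `v` and every other guard by at most one edge. -/
def IsDefenseClosedFamily {V : Type*} (G : SimpleGraph V) (F : Set (Set V)) : Prop :=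
  (∀ S ∈ F, IsVertexCover G S) ∧
  ∀ S ∈ F, ∀ u v : V, G.Adj u v → u ∈ S → v ∉ S →
    ∃ S' ∈ F, ∃ f : V → V, Set.BijOn f S S' ∧ f u = v ∧
      ∀ s ∈ S, f s = s ∨ G.Adj s (f s)

lemma t3_adj_up' (x y : ℤ) : T3.Adj (x, y) (x, y + 1) := by
  rw [T3, SimpleGraph.fromRel_adj]
  exact ⟨by simp [Prod.ext_iff], Or.inl (Or.inl rfl)⟩

lemma t3_adj_d0' (x y : ℤ) (h : (4:ℤ) ∣ y) : T3.Adj (x, y) (x + 1, y + 1) := by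
  rw [T3, SimpleGraph.fromRel_adj]
  exact ⟨by simp [Prod.ext_iff], Or.inl (Or.inr (Or.inl ⟨h, rfl⟩))⟩

lemma t3_adj_d2' (x y : ℤ) (h : (4:ℤ) ∣ (y - 2)) : T3.Adj (x, y) (x - 1, y + 1) := by
  rw [T3, SimpleGraph.fromRel_adj]
  exact ⟨by simp [Prod.ext_iff], Or.inl (Or.inr (Or.inr ⟨h, rfl⟩))⟩

lemma t3_adj_cases {u v : ℤ × ℤ} (h : T3.Adj u v) :
    v = (u.1, u.2 + 1) ∨ ((4:ℤ) ∣ u.2 ∧ v = (u.1 + 1, u.2 + 1)) ∨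
    ((4:ℤ) ∣ (u.2 - 2) ∧ v = (u.1 - 1, u.2 + 1)) ∨
    u = (v.1, v.2 + 1) ∨ ((4:ℤ) ∣ v.2 ∧ u = (v.1 + 1, v.2 + 1)) ∨
    ((4:ℤ) ∣ (v.2 - 2) ∧ u = (v.1 - 1, v.2 + 1)) := by
  rw [T3, SimpleGraph.fromRel_adj] at h
  tauto

/-- guard maps -/
def fUp (p : ℤ × ℤ) : ℤ × ℤ := (p.1, p.2 + 1)
def fDn (p : ℤ × ℤ) : ℤ × ℤ := (p.1, p.2 - 1)
def fD0 (p : ℤ × ℤ) : ℤ × ℤ :=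
  if (4:ℤ) ∣ p.2 then (p.1 + 1, p.2 + 1) else (p.1 - 1, p.2 + 1)
def fD1 (p : ℤ × ℤ) : ℤ × ℤ :=
  if (4:ℤ) ∣ (p.2 - 1) then (p.1 - 1, p.2 - 1) else (p.1 + 1, p.2 - 1)

lemma fD0_snd (p : ℤ × ℤ) : (fD0 p).2 = p.2 + 1 := by unfold fD0; split <;> rfl
lemma fD1_snd (p : ℤ × ℤ) : (fD1 p).2 = p.2 - 1 := by unfold fD1; split <;> rfl

lemma fD1_fD0 (p : ℤ × ℤ) : fD1 (fD0 p) = p := by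
  by_cases h : (4:ℤ) ∣ p.2
  · have h' : (4:ℤ) ∣ (p.2 + 1 - 1) := by simpa using h
    simp [fD0, fD1, h, h']
  · have h' : ¬ (4:ℤ) ∣ (p.2 + 1 - 1) := by simpa using h
    simp [fD0, fD1, h, h']

lemma fD0_fD1 (p : ℤ × ℤ) : fD0 (fD1 p) = p := by
  by_cases h : (4:ℤ) ∣ (p.2 - 1)
  · simp [fD1, fD0, h]
  · simp [fD1, fD0, h]

lemma fDn_fUp (p : ℤ × ℤ) : fDn (fUp p) = p := by simp [fUp, fDn]
lemma fUp_fDn (p : ℤ × ℤ) : fUp (fDn p) = p := by simp [fUp, fDn]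

noncomputable section
open Set

abbrev Ev : Set (ℤ × ℤ) := {p : ℤ × ℤ | Even p.2}
abbrev Od : Set (ℤ × ℤ) := {p : ℤ × ℤ | Odd p.2}

lemma bij_up_EO : Set.BijOn fUp Ev Od :=
  Set.InvOn.bijOn ⟨fun p _ => fDn_fUp p, fun p _ => fUp_fDn p⟩
    (fun p hp => hp.add_one) (fun p hp => by simpa [fDn, Int.even_sub_one] using hp.sub_odd odd_one)

lemma bij_up_OE : Set.BijOn fUp Od Ev :=
  Set.InvOn.bijOn ⟨fun p _ => fDn_fUp p, fun p _ => fUp_fDn p⟩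
    (fun p hp => hp.add_one) (fun p hp => by
      simp only [Od, fDn, Set.mem_setOf_eq] at *
      rw [Int.even_iff] at hp; rw [Int.odd_iff]; omega)

lemma bij_dn_EO : Set.BijOn fDn Ev Od :=
  Set.InvOn.bijOn ⟨fun p _ => fUp_fDn p, fun p _ => fDn_fUp p⟩
    (fun p hp => by
      simp only [Ev, Od, fDn, Set.mem_setOf_eq] at *
      rw [Int.even_iff] at hp; rw [Int.odd_iff]; omega)
    (fun p hp => hp.add_one)

lemma bij_dn_OE : Set.BijOn fDn Od Ev :=
  Set.InvOn.bijOn ⟨fun p _ => fUp_fDn p, fun p _ => fDn_fUp p⟩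
    (fun p hp => by
      simp only [Ev, Od, fDn, Set.mem_setOf_eq] at *
      rw [Int.odd_iff] at hp; rw [Int.even_iff]; omega)
    (fun p hp => hp.add_one)

lemma bij_d0 : Set.BijOn fD0 Ev Od :=
  Set.InvOn.bijOn ⟨fun p _ => fD1_fD0 p, fun p _ => fD0_fD1 p⟩
    (fun p hp => by
      simp only [Ev, Od, Set.mem_setOf_eq, fD0_snd] at *
      exact hp.add_one)
    (fun p hp => by
      simp only [Ev, Od, Set.mem_setOf_eq, fD1_snd] at *
      rw [Int.odd_iff] at hp; rw [Int.even_iff]; omega)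

lemma bij_d1 : Set.BijOn fD1 Od Ev :=
  Set.InvOn.bijOn ⟨fun p _ => fD0_fD1 p, fun p _ => fD1_fD0 p⟩
    (fun p hp => by
      simp only [Ev, Od, Set.mem_setOf_eq, fD1_snd] at *
      rw [Int.odd_iff] at hp; rw [Int.even_iff]; omega)
    (fun p hp => by
      simp only [Ev, Od, Set.mem_setOf_eq, fD0_snd] at *
      exact hp.add_one)

lemma adj_fUp (p : ℤ × ℤ) : T3.Adj p (fUp p) := t3_adj_up' p.1 p.2

lemma adj_fDn (p : ℤ × ℤ) : T3.Adj p (fDn p) := by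
  have h := (t3_adj_up' p.1 (p.2 - 1)).symm
  have e : ((p.1 : ℤ), p.2 - 1 + 1) = p := by simp
  rwa [e] at h

lemma adj_fD0 {p : ℤ × ℤ} (hp : Even p.2) : T3.Adj p (fD0 p) := by
  by_cases h : (4:ℤ) ∣ p.2
  · simpa [fD0, h] using t3_adj_d0' p.1 p.2 h
  · have h2 : (4:ℤ) ∣ (p.2 - 2) := by rw [Int.even_iff] at hp; omega
    simpa [fD0, h] using t3_adj_d2' p.1 p.2 h2

lemma adj_fD1 {p : ℤ × ℤ} (hp : Odd p.2) : T3.Adj p (fD1 p) := by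
  by_cases h : (4:ℤ) ∣ (p.2 - 1)
  · have h' := (t3_adj_d0' (p.1 - 1) (p.2 - 1) h).symm
    have e : ((p.1 - 1 + 1 : ℤ), p.2 - 1 + 1) = p := by simp
    rw [e] at h'
    simpa [fD1, h] using h'
  · have h2 : (4:ℤ) ∣ (p.2 - 1 - 2) := by rw [Int.odd_iff] at hp; omega
    have h' := (t3_adj_d2' (p.1 + 1) (p.2 - 1) h2).symm
    have e : ((p.1 + 1 - 1 : ℤ), p.2 - 1 + 1) = p := by simp
    rw [e] at h'
    simpa [fD1, h] using h'

lemma ncard_box_parity (m n : ℕ) (r : ℤ) (hr : r = 0 ∨ r = 1) :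
    ({p : ℤ × ℤ | p.2 % 2 = r} ∩ box m (2 * n)).ncard = m * n := by
  have hinj : Function.Injective (fun q : ℤ × ℤ => (q.1, 2 * q.2 + r)) := by
    rintro ⟨a, b⟩ ⟨c, d⟩ h
    simp only [Prod.mk.injEq] at h ⊢
    omega
  have himg : {p : ℤ × ℤ | p.2 % 2 = r} ∩ box m (2 * n) =
      (fun q : ℤ × ℤ => (q.1, 2 * q.2 + r)) ''
        ↑(Finset.Ico (0:ℤ) (m:ℤ) ×ˢ Finset.Ico (0:ℤ) (n:ℤ)) := by
    ext ⟨x, y⟩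
    simp only [Set.mem_inter_iff, Set.mem_setOf_eq, box, Set.mem_prod, Set.mem_Ico,
      Set.mem_image, Finset.mem_coe, Finset.mem_product, Finset.mem_Ico, Prod.exists,
      Prod.mk.injEq]
    constructor
    · rintro ⟨hy, ⟨hx0, hxm⟩, hy0, hy2⟩
      exact ⟨x, (y - r) / 2, ⟨⟨hx0, hxm⟩, by omega, by push_cast at hy2 ⊢; omega⟩,
        rfl, by omega⟩
    · rintro ⟨a, b, ⟨⟨ha0, ham⟩, hb0, hbn⟩, rfl, rfl⟩
      exact ⟨by omega, ⟨ha0, ham⟩, by omega, by push_cast; omega⟩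
  rw [himg, Set.ncard_image_of_injective _ hinj, Set.ncard_coe_finset,
    Finset.card_product, Int.card_Ico, Int.card_Ico]
  simp

/-- `{O₀, O₁}` (even/odd `y`) is a defense-closed family of vertex covers of the infinite
hexagonal grid, each member meeting `{0,…,m−1} × {0,…,2n−1}` in exactly `m·n` vertices. -/
theorem stmt_7 :
    IsDefenseClosedFamily T3
      {{p : ℤ × ℤ | Even p.2}, {p : ℤ × ℤ | Odd p.2}} ∧
    ∀ m n : ℕ, 1 ≤ m → 1 ≤ n →
      ({p : ℤ × ℤ | Even p.2} ∩ box m (2 * n)).ncard = m * n ∧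
      ({p : ℤ × ℤ | Odd p.2} ∩ box m (2 * n)).ncard = m * n := by
  constructor
  · constructor
    · intro S hS u v h
      have hsnd : v.2 = u.2 + 1 ∨ u.2 = v.2 + 1 := by
        rcases t3_adj_cases h with h1 | ⟨_, h1⟩ | ⟨_, h1⟩ | h1 | ⟨_, h1⟩ | ⟨_, h1⟩ <;>
          rw [h1] <;> simp
      simp only [Set.mem_insert_iff, Set.mem_singleton_iff] at hS
      rcases hS with rfl | rfl
      · simp only [Set.mem_setOf_eq, Int.even_iff]; omega
      · simp only [Set.mem_setOf_eq, Int.odd_iff]; omega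
    · intro S hS u v hadj huS hvS
      simp only [Set.mem_insert_iff, Set.mem_singleton_iff] at hS
      have hEv : Ev ∈ ({Ev, Od} : Set (Set (ℤ × ℤ))) := Set.mem_insert _ _
      have hOd : Od ∈ ({Ev, Od} : Set (Set (ℤ × ℤ))) := by
        exact Set.mem_insert_iff.mpr (Or.inr rfl)
      rcases hS with rfl | rfl
      · have hu : Even u.2 := huS
        have hv : ¬ Even v.2 := hvS
        rcases t3_adj_cases hadj with h1 | ⟨h4, h1⟩ | ⟨h4, h1⟩ | h1 | ⟨h4, h1⟩ | ⟨h4, h1⟩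
        · exact ⟨_, hOd, fUp, bij_up_EO, by rw [h1]; rfl, fun s _ => Or.inr (adj_fUp s)⟩
        · exact ⟨_, hOd, fD0, bij_d0, by rw [h1]; simp [fD0, h4],
            fun s hs => Or.inr (adj_fD0 hs)⟩
        · have h4' : ¬ (4:ℤ) ∣ u.2 := by omega
          exact ⟨_, hOd, fD0, bij_d0, by rw [h1]; simp [fD0, h4'],
            fun s hs => Or.inr (adj_fD0 hs)⟩
        · refine ⟨_, hOd, fDn, bij_dn_EO, ?_, fun s _ => Or.inr (adj_fDn s)⟩
          rw [h1]; simp [fDn]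
        · exfalso; rw [Int.even_iff] at hv; omega
        · exfalso; rw [Int.even_iff] at hv; omega
      · have hu : Odd u.2 := huS
        have hv : ¬ Odd v.2 := hvS
        rcases t3_adj_cases hadj with h1 | ⟨h4, h1⟩ | ⟨h4, h1⟩ | h1 | ⟨h4, h1⟩ | ⟨h4, h1⟩
        · exact ⟨_, hEv, fUp, bij_up_OE, by rw [h1]; rfl, fun s _ => Or.inr (adj_fUp s)⟩
        · exfalso; rw [Int.odd_iff] at hu; omega
        · exfalso; rw [Int.odd_iff] at hu; omega
        · refine ⟨_, hEv, fDn, bij_dn_OE, ?_, fun s _ => Or.inr (adj_fDn s)⟩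
          rw [h1]; simp [fDn]
        · refine ⟨_, hEv, fD1, bij_d1, ?_, fun s hs => Or.inr (adj_fD1 hs)⟩
          have h4' : (4:ℤ) ∣ (v.2 + 1 - 1) := by simpa using h4
          rw [h1]; simp [fD1, h4']
          exact fun hc => absurd h4 hc
        · refine ⟨_, hEv, fD1, bij_d1, ?_, fun s hs => Or.inr (adj_fD1 hs)⟩
          have h4' : ¬ (4:ℤ) ∣ (v.2 + 1 - 1) := by simp; omega
          rw [h1]; simp [fD1, h4']
          exact fun hc => absurd hc (by omega)
  · intro m n _ _
    have he := ncard_box_parity m n 0 (Or.inl rfl)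
    have ho := ncard_box_parity m n 1 (Or.inr rfl)
    constructor
    · rw [← he]; congr 1; ext p; simp [Int.even_iff]
    · rw [← ho]; congr 1; ext p; simp [Int.odd_iff]
end
end

section
/- Let C = {(x,y) ∈ ℤ × ℤ : x is odd} ∪ {(x,y) ∈ ℤ × ℤ : x is even and y is even}. Then the family {C + t : t ∈ ℤ × ℤ} of all translates of C is a defense-closed family of vertex covers of the infinite octagonal grid T₈, and for all m, n ≥ 1 each translate of C meets {0,…,2m−1} × {0,…,2n−1} in exactly 3·m·n vertices. -/
/-- The optimal cover of the octagonal grid: odd columns entirely, even columns on even rows. -/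
def C9 : Set (ℤ × ℤ) :=
  {p : ℤ × ℤ | Odd p.1} ∪ {p : ℤ × ℤ | Even p.1 ∧ Even p.2}

lemma countP (b : ℤ) (m : ℕ) :
    ((Finset.Ico (0:ℤ) (2*m)).filter (fun x => (x - b) % 2 = 0)).card = m := by
  have hinj : Function.Injective (fun k : ℤ => 2*k + b % 2) := by
    intro x y h; dsimp at h; omega
  rw [show ((Finset.Ico (0:ℤ) (2*m)).filter (fun x => (x - b) % 2 = 0))
      = (Finset.Ico (0:ℤ) m).image (fun k => 2*k + b % 2) from ?_,
    Finset.card_image_of_injective _ hinj]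
  · simp
  · ext x
    simp only [Finset.mem_filter, Finset.mem_Ico, Finset.mem_image]
    constructor
    · rintro ⟨⟨h0, h1⟩, h2⟩
      exact ⟨(x - b % 2)/2, ⟨by omega, by omega⟩, by omega⟩
    · rintro ⟨k, ⟨h0, h1⟩, rfl⟩
      refine ⟨⟨by omega, by omega⟩, by omega⟩

lemma mem_trans_C9 (t p : ℤ × ℤ) :
    p ∈ (fun q => q + t) '' C9 ↔
      (p.1 - t.1) % 2 = 1 ∨ ((p.1 - t.1) % 2 = 0 ∧ (p.2 - t.2) % 2 = 0) := by
  constructor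
  · rintro ⟨⟨a, b⟩, h, rfl⟩
    simp only [C9, Set.mem_union, Set.mem_setOf_eq, Int.odd_iff, Int.even_iff] at h
    simpa using by omega
  · intro h
    refine ⟨p - t, ?_, by simp⟩
    simp only [C9, Set.mem_union, Set.mem_setOf_eq, Int.odd_iff, Int.even_iff, Prod.fst_sub,
      Prod.snd_sub]
    omega

lemma T8_adj (p q : ℤ × ℤ) :
    T8.Adj p q ↔ p ≠ q ∧ |p.1 - q.1| ≤ 1 ∧ |p.2 - q.2| ≤ 1 := by
  rw [T8, SimpleGraph.fromRel_adj]
  constructor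
  · rintro ⟨h, h1 | h1⟩
    · exact ⟨h, h1⟩
    · exact ⟨h, by rw [abs_sub_comm]; exact h1.1, by rw [abs_sub_comm]; exact h1.2⟩
  · rintro ⟨h, h1, h2⟩; exact ⟨h, Or.inl ⟨h1, h2⟩⟩

/-- The translates of `C9` form a defense-closed family of vertex covers of the infinite
octagonal grid, each translate meeting `{0,…,2m−1} × {0,…,2n−1}` in exactly `3mn` vertices. -/
theorem stmt_9 :
    IsDefenseClosedFamily T8 {S | ∃ t : ℤ × ℤ, S = (fun p => p + t) '' C9} ∧
    ∀ m n : ℕ, 1 ≤ m → 1 ≤ n → ∀ t : ℤ × ℤ,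
      (((fun p => p + t) '' C9) ∩ box (2 * m) (2 * n)).ncard = 3 * m * n := by
  constructor
  · constructor
    · -- vertex cover
      rintro S ⟨t, rfl⟩ u v hadj
      by_contra h
      push_neg at h
      obtain ⟨hu, hv⟩ := h
      rw [mem_trans_C9] at hu hv
      rw [T8_adj] at hadj
      obtain ⟨hne, h1, h2⟩ := hadj
      rw [abs_le] at h1 h2
      apply hne
      have e1 : u.1 = v.1 := by omega
      have e2 : u.2 = v.2 := by omega
      exact Prod.ext e1 e2
    · -- defense
      rintro S ⟨t, rfl⟩ u v hadj huS hvS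
      refine ⟨(fun p => p + (t + (v - u))) '' C9, ⟨t + (v - u), rfl⟩,
        (fun p => p + (v - u)), ?_, by simp, ?_⟩
      · have hinj : Function.Injective (fun p : ℤ × ℤ => p + (v - u)) :=
          add_left_injective _
        have hb := hinj.injOn.bijOn_image (s := (fun p => p + t) '' C9)
        have himg : (fun p : ℤ × ℤ => p + (v - u)) '' ((fun p => p + t) '' C9)
            = (fun p => p + (t + (v - u))) '' C9 := by
          rw [← Set.image_comp]
          funext p
          simp [add_assoc]
        rwa [himg] at hb
      · intro s _
        right
        rw [T8_adj] at hadj ⊢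
        obtain ⟨hne, h1, h2⟩ := hadj
        refine ⟨?_, ?_, ?_⟩
        · intro hc
          apply hne
          have : v - u = 0 := by
            have := congrArg (fun z => z - s) hc.symm
            simpa using this
          have := sub_eq_zero.mp this
          exact this.symm
        · simpa [abs_sub_comm u.1 v.1] using h1
        · simpa [abs_sub_comm u.2 v.2] using h2
  · -- counting
    intro m n _ _ t
    have hset : ((fun p => p + t) '' C9) ∩ box (2 * m) (2 * n) =
        ↑(((Finset.Ico (0:ℤ) (2*m)).filter (fun x => (x - (t.1 + 1)) % 2 = 0) ×ˢ
            Finset.Ico (0:ℤ) (2*n)) ∪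
          ((Finset.Ico (0:ℤ) (2*m)).filter (fun x => (x - t.1) % 2 = 0) ×ˢ
            (Finset.Ico (0:ℤ) (2*n)).filter (fun y => (y - t.2) % 2 = 0))) := by
      ext ⟨x, y⟩
      simp only [Set.mem_inter_iff, mem_trans_C9, box, Set.mem_prod, Set.mem_Ico,
        Finset.coe_union, Set.mem_union, Finset.coe_product, Finset.coe_filter,
        Set.mem_setOf_eq, Finset.mem_Ico, Finset.mem_coe, Finset.mem_filter]
      push_cast
      constructor
      · rintro ⟨h1, h2, h3⟩
        omega
      · intro h
        omega
    rw [hset, Set.ncard_coe_finset, Finset.card_union_of_disjoint, Finset.card_product,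
      Finset.card_product, countP, countP, countP]
    · rw [Int.card_Ico]
      have h2n : ((2 * (n:ℤ)) - 0).toNat = 2 * n := by omega
      rw [h2n]
      ring
    · rw [Finset.disjoint_left]
      rintro ⟨x, y⟩ h1 h2
      simp only [Finset.mem_product, Finset.mem_filter, Finset.mem_Ico] at h1 h2
      omega
end

section
/- For every integer w ≥ 2, every vertex cover C of the two-row finite triangular grid T₆(2,w) satisfies 3·|C| ≥ 4w − 2. -/
/-- The infinite triangular grid. -/
def T6 : SimpleGraph (ℤ × ℤ) :=
  SimpleGraph.fromRel (fun p q =>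
    (q.1 - p.1, q.2 - p.2) ∈
      ({(1, 0), (-1, 0), (0, 1), (0, -1), (1, 1), (-1, -1)} : Set (ℤ × ℤ)))

lemma mem_box {w h : ℕ} {p : ℤ × ℤ} :
    p ∈ box w h ↔ 0 ≤ p.1 ∧ p.1 < w ∧ 0 ≤ p.2 ∧ p.2 < h := by
  simp [box, Set.mem_prod, and_assoc]

lemma adj_of {a b a' b' : ℤ}
    (h : (a' - a = 1 ∧ b' = b) ∨ (a' = a ∧ b' - b = 1) ∨ (a' - a = 1 ∧ b' - b = 1)) :
    T6.Adj (a, b) (a', b') := by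
  simp only [T6, SimpleGraph.fromRel_adj, Set.mem_insert_iff, Set.mem_singleton_iff,
    Prod.mk.injEq, ne_eq]
  constructor
  · intro hh; omega
  · rcases h with ⟨h1, h2⟩ | ⟨h1, h2⟩ | ⟨h1, h2⟩
    · exact Or.inl (Or.inl ⟨h1, by omega⟩)
    · exact Or.inl (Or.inr (Or.inr (Or.inl ⟨by omega, by omega⟩)))
    · exact Or.inl (Or.inr (Or.inr (Or.inr (Or.inr (Or.inl ⟨h1, by omega⟩)))))

lemma cov_of {w : ℕ} {C : Set (ℤ × ℤ)} (hcov : IsVertexCover (finGrid T6 w 2) C)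
    {p q : ℤ × ℤ} (hadj : T6.Adj p q) (hp : p ∈ box w 2) (hq : q ∈ box w 2) :
    p ∈ C ∨ q ∈ C :=
  hcov ⟨hadj, hp, hq⟩

lemma pair_le {α : Type*} [DecidableEq α] {F : Finset α} {P : α → Prop} [DecidablePred P]
    {a b : α} (hab : a ≠ b) (ha : a ∈ F) (hb : b ∈ F) (hPa : P a) (hPb : P b) :
    2 ≤ (F.filter P).card := by
  have hs : ({a, b} : Finset α) ⊆ F.filter P := by
    intro x hx
    simp only [Finset.mem_insert, Finset.mem_singleton] at hx
    rcases hx with rfl | rfl <;> simp [Finset.mem_filter, *]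
  calc 2 = ({a, b} : Finset α).card := (Finset.card_pair hab).symm
    _ ≤ _ := Finset.card_le_card hs

lemma tri_bound {C : Set (ℤ × ℤ)} {F : Finset (ℤ × ℤ)} (hmem : ∀ p, p ∈ F ↔ p ∈ C)
    {u v t : ℤ × ℤ} (huv : u ≠ v) (hvt : v ≠ t) (hut : u ≠ t)
    (h1 : u ∈ C ∨ v ∈ C) (h2 : v ∈ C ∨ t ∈ C) (h3 : u ∈ C ∨ t ∈ C) :
    2 ≤ (F.filter (fun p => p = u ∨ p = v ∨ p = t)).card := by
  classical
  have key : (u ∈ C ∧ v ∈ C) ∨ (v ∈ C ∧ t ∈ C) ∨ (u ∈ C ∧ t ∈ C) := by tauto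
  rcases key with ⟨ha, hb⟩ | ⟨ha, hb⟩ | ⟨ha, hb⟩
  · exact pair_le huv ((hmem u).2 ha) ((hmem v).2 hb) (by tauto) (by tauto)
  · exact pair_le hvt ((hmem v).2 ha) ((hmem t).2 hb) (by tauto) (by tauto)
  · exact pair_le hut ((hmem u).2 ha) ((hmem t).2 hb) (by tauto) (by tauto)

/-- Every vertex cover of the two-row triangular grid `T₆(2,w)` satisfies `3|C| ≥ 4w − 2`. -/
theorem stmt_10 (w : ℕ) (hw : 2 ≤ w)
    (C : Set (ℤ × ℤ)) (hsub : C ⊆ box w 2)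
    (hcov : IsVertexCover (finGrid T6 w 2) C) :
    4 * w - 2 ≤ 3 * C.ncard := by
  classical
  have hfin : C.Finite :=
    (((Set.finite_Ico (0 : ℤ) (w : ℤ)).prod (Set.finite_Ico (0 : ℤ) (2 : ℤ)))).subset hsub
  set F := hfin.toFinset with hF
  have hmem : ∀ p, p ∈ F ↔ p ∈ C := fun p => hfin.mem_toFinset
  have hncard : C.ncard = F.card := Set.ncard_eq_toFinset_card C hfin
  have hwz : (2 : ℤ) ≤ (w : ℤ) := by exact_mod_cast hw
  have hcol : ∀ p ∈ F, 0 ≤ p.1 ∧ p.1 < (w : ℤ) := by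
    intro p hp
    have := mem_box.1 (hsub ((hmem p).1 hp))
    exact ⟨this.1, this.2.1⟩
  have hedge : ∀ a b a' b' : ℤ, 0 ≤ a → a < w → 0 ≤ a' → a' < w → 0 ≤ b → b < 2 →
      0 ≤ b' → b' < 2 →
      ((a' - a = 1 ∧ b' = b) ∨ (a' = a ∧ b' - b = 1) ∨ (a' - a = 1 ∧ b' - b = 1)) →
      (a, b) ∈ C ∨ (a', b') ∈ C := by
    intro a b a' b' h1 h2 h3 h4 h5 h6 h7 h8 h9
    exact cov_of hcov (adj_of h9) (mem_box.2 ⟨h1, h2, h5, h6⟩) (mem_box.2 ⟨h3, h4, h7, h8⟩)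
  set cnt : ℤ → ℕ := fun s => (F.filter (fun p => s ≤ p.1 ∧ p.1 ≤ s + 2)).card with hcnt
  -- double counting
  have hsum : ∑ s ∈ Finset.Icc (-2 : ℤ) ((w : ℤ) - 1), cnt s = 3 * F.card := by
    have h1 : ∀ s, cnt s = ∑ p ∈ F, if s ≤ p.1 ∧ p.1 ≤ s + 2 then 1 else 0 := by
      intro s; exact Finset.card_filter _ _
    rw [Finset.sum_congr rfl (fun s _ => h1 s), Finset.sum_comm]
    have h2 : ∀ p ∈ F,
        (∑ s ∈ Finset.Icc (-2 : ℤ) ((w : ℤ) - 1), if s ≤ p.1 ∧ p.1 ≤ s + 2 then 1 else 0) = 3 := by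
      intro p hp
      rw [← Finset.card_filter]
      have heq : (Finset.Icc (-2 : ℤ) ((w : ℤ) - 1)).filter (fun s => s ≤ p.1 ∧ p.1 ≤ s + 2)
          = Finset.Icc (p.1 - 2) p.1 := by
        ext x
        simp only [Finset.mem_filter, Finset.mem_Icc]
        have := hcol p hp
        omega
      rw [heq, Int.card_Icc]
      omega
    rw [Finset.sum_congr rfl h2, Finset.sum_const, smul_eq_mul, mul_comm]
  -- full window bound
  have h4 : ∀ s ∈ Finset.Icc (0 : ℤ) ((w : ℤ) - 3), 4 ≤ cnt s := by
    intro s hs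
    simp only [Finset.mem_Icc] at hs
    -- triangle 1: (s,0), (s,1), (s+1,1)
    have e11 := hedge s 0 s 1 (by omega) (by omega) (by omega) (by omega)
      (by omega) (by omega) (by omega) (by omega) (by omega)
    have e12 := hedge s 1 (s+1) 1 (by omega) (by omega) (by omega) (by omega)
      (by omega) (by omega) (by omega) (by omega) (by omega)
    have e13 := hedge s 0 (s+1) 1 (by omega) (by omega) (by omega) (by omega)
      (by omega) (by omega) (by omega) (by omega) (by omega)
    -- triangle 2: (s+1,0), (s+2,0), (s+2,1)
    have e21 := hedge (s+1) 0 (s+2) 0 (by omega) (by omega) (by omega) (by omega)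
      (by omega) (by omega) (by omega) (by omega) (by omega)
    have e22 := hedge (s+2) 0 (s+2) 1 (by omega) (by omega) (by omega) (by omega)
      (by omega) (by omega) (by omega) (by omega) (by omega)
    have e23 := hedge (s+1) 0 (s+2) 1 (by omega) (by omega) (by omega) (by omega)
      (by omega) (by omega) (by omega) (by omega) (by omega)
    have b1 : 2 ≤ (F.filter (fun p => p = (s,(0:ℤ)) ∨ p = (s,(1:ℤ)) ∨ p = (s+1,(1:ℤ)))).card :=
      tri_bound hmem (by simp only [ne_eq, Prod.mk.injEq]; omega)
        (by simp only [ne_eq, Prod.mk.injEq]; omega)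
        (by simp only [ne_eq, Prod.mk.injEq]; omega) e11 e12 e13
    have b2 : 2 ≤ (F.filter (fun p => p = (s+1,(0:ℤ)) ∨ p = (s+2,(0:ℤ)) ∨ p = (s+2,(1:ℤ)))).card :=
      tri_bound hmem (by simp only [ne_eq, Prod.mk.injEq]; omega)
        (by simp only [ne_eq, Prod.mk.injEq]; omega)
        (by simp only [ne_eq, Prod.mk.injEq]; omega) e21 e22 e23
    have hdisj : Disjoint
        (F.filter (fun p => p = (s,(0:ℤ)) ∨ p = (s,(1:ℤ)) ∨ p = (s+1,(1:ℤ))))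
        (F.filter (fun p => p = (s+1,(0:ℤ)) ∨ p = (s+2,(0:ℤ)) ∨ p = (s+2,(1:ℤ)))) := by
      rw [Finset.disjoint_left]
      intro x hx hy
      simp only [Finset.mem_filter] at hx hy
      rcases hx.2 with rfl | rfl | rfl <;>
        rcases hy.2 with h | h | h <;> simp_all [Prod.ext_iff] <;> try omega
    have hunion :
        (F.filter (fun p => p = (s,(0:ℤ)) ∨ p = (s,(1:ℤ)) ∨ p = (s+1,(1:ℤ)))) ∪
        (F.filter (fun p => p = (s+1,(0:ℤ)) ∨ p = (s+2,(0:ℤ)) ∨ p = (s+2,(1:ℤ))))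
        ⊆ F.filter (fun p => s ≤ p.1 ∧ p.1 ≤ s + 2) := by
      intro x hx
      simp only [Finset.mem_union, Finset.mem_filter] at hx ⊢
      rcases hx with ⟨hxF, h | h | h⟩ | ⟨hxF, h | h | h⟩ <;> subst h <;>
        exact ⟨hxF, by constructor <;> simp <;> omega⟩
    calc (4 : ℕ) ≤ _ + _ := Nat.add_le_add b1 b2
      _ = _ := (Finset.card_union_of_disjoint hdisj).symm
      _ ≤ cnt s := Finset.card_le_card hunion
  -- boundary bounds
  have hvert : ∀ a : ℤ, 0 ≤ a → a < w → (a, (0:ℤ)) ∈ C ∨ (a, (1:ℤ)) ∈ C := by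
    intro a h1 h2
    exact hedge a 0 a 1 h1 h2 h1 h2 (by omega) (by omega) (by omega) (by omega) (by omega)
  have hone : ∀ a : ℤ, 0 ≤ a → a < w → ∀ s : ℤ, s ≤ a → a ≤ s + 2 → 1 ≤ cnt s := by
    intro a h1 h2 s hs1 hs2
    rcases hvert a h1 h2 with h | h
    · exact Finset.card_pos.2 ⟨(a, 0), Finset.mem_filter.2 ⟨(hmem _).2 h, ⟨hs1, hs2⟩⟩⟩
    · exact Finset.card_pos.2 ⟨(a, 1), Finset.mem_filter.2 ⟨(hmem _).2 h, ⟨hs1, hs2⟩⟩⟩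
  have htwo : ∀ a : ℤ, 0 ≤ a → a + 1 < w → ∀ s : ℤ, s ≤ a → a + 1 ≤ s + 2 → 2 ≤ cnt s := by
    intro a h1 h2 s hs1 hs2
    rcases hvert a h1 (by omega) with h | h <;>
      rcases hvert (a+1) (by omega) h2 with h' | h'
    · exact pair_le (by simp only [ne_eq, Prod.mk.injEq]; omega) ((hmem _).2 h) ((hmem _).2 h')
        ⟨hs1, by omega⟩ ⟨by omega, hs2⟩
    · exact pair_le (by simp only [ne_eq, Prod.mk.injEq]; omega) ((hmem _).2 h) ((hmem _).2 h')
        ⟨hs1, by omega⟩ ⟨by omega, hs2⟩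
    · exact pair_le (by simp only [ne_eq, Prod.mk.injEq]; omega) ((hmem _).2 h) ((hmem _).2 h')
        ⟨hs1, by omega⟩ ⟨by omega, hs2⟩
    · exact pair_le (by simp only [ne_eq, Prod.mk.injEq]; omega) ((hmem _).2 h) ((hmem _).2 h')
        ⟨hs1, by omega⟩ ⟨by omega, hs2⟩
  -- split the sum
  have hsplit : Finset.Icc (-2 : ℤ) ((w : ℤ) - 1)
      = insert (-2) (insert (-1) (insert ((w:ℤ)-1) (insert ((w:ℤ)-2)
          (Finset.Icc (0 : ℤ) ((w : ℤ) - 3))))) := by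
    ext x
    simp only [Finset.mem_insert, Finset.mem_Icc]
    omega
  rw [hsplit] at hsum
  rw [Finset.sum_insert (by simp only [Finset.mem_insert, Finset.mem_Icc]; omega)] at hsum
  rw [Finset.sum_insert (by simp only [Finset.mem_insert, Finset.mem_Icc]; omega)] at hsum
  rw [Finset.sum_insert (by simp only [Finset.mem_insert, Finset.mem_Icc]; omega)] at hsum
  rw [Finset.sum_insert (by simp only [Finset.mem_Icc]; omega)] at hsum
  have hrest : ((Finset.Icc (0 : ℤ) ((w : ℤ) - 3)).card) * 4
      ≤ ∑ s ∈ Finset.Icc (0 : ℤ) ((w : ℤ) - 3), cnt s := by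
    calc _ = ∑ _s ∈ Finset.Icc (0 : ℤ) ((w : ℤ) - 3), 4 := by
          rw [Finset.sum_const, smul_eq_mul]
      _ ≤ _ := Finset.sum_le_sum h4
  have hcard3 : (Finset.Icc (0 : ℤ) ((w : ℤ) - 3)).card = w - 2 := by
    rw [Int.card_Icc]; omega
  have c1 : 1 ≤ cnt (-2) := hone 0 (by omega) (by omega) (-2) (by omega) (by omega)
  have c2 : 2 ≤ cnt (-1) := htwo 0 (by omega) (by omega) (-1) (by omega) (by omega)
  have c3 : 1 ≤ cnt ((w:ℤ)-1) := hone ((w:ℤ)-1) (by omega) (by omega) _ (by omega) (by omega)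
  have c4 : 2 ≤ cnt ((w:ℤ)-2) := htwo ((w:ℤ)-2) (by omega) (by omega) _ (by omega) (by omega)
  rw [hcard3] at hrest
  rw [hncard]
  omega
end
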